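/- The map Φ_{p,q}(r e^{iθ}) = (r^{√(pq)}/√(p+q)) (√q e^{ipθ}, i√p e^{-iqθ}) from the closed unit disc to ℂ² is weakly conformal: in polar coordinates, |∂_r Φ_{p,q}|² = |(1/r) ∂_θ Φ_{p,q}|² and ⟨∂_r Φ_{p,q}, (1/r) ∂_θ Φ_{p,q}⟩ = 0 for all r > 0 and θ. -/

import Mathlib

/-- The Schoen–Wolfson cone parametrization `Φ_{p,q}` in polar coordinates. -/
noncomputable def SWPhi (p q : ℕ) (r θ : ℝ) : ℂ × ℂ :=
  ( ((r ^ Real.sqrt ((p : ℝ) * q) / Real.sqrt ((p : ℝ) + q) * Real.sqrt q : ℝ) : ℂ) *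
      Complex.exp (Complex.I * p * θ),
    ((r ^ Real.sqrt ((p : ℝ) * q) / Real.sqrt ((p : ℝ) + q) * Real.sqrt p : ℝ) : ℂ) *
      Complex.I * Complex.exp (-(Complex.I * q * θ)) )

/-- The real (Euclidean) inner product on `ℂ² ≅ ℝ⁴`. -/
noncomputable def rinner (u v : ℂ × ℂ) : ℝ :=
  (u.1 * (starRingEnd ℂ) v.1).re + (u.2 * (starRingEnd ℂ) v.2).re

lemma swphi_hasDerivAt_r (p q : ℕ) (r θ : ℝ) (hr : 0 < r) :
    HasDerivAt (fun s => SWPhi p q s θ)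
      ( ((Real.sqrt ((p : ℝ) * q) * r ^ (Real.sqrt ((p : ℝ) * q) - 1) /
            Real.sqrt ((p : ℝ) + q) * Real.sqrt q : ℝ) : ℂ) *
          Complex.exp (Complex.I * p * θ),
        ((Real.sqrt ((p : ℝ) * q) * r ^ (Real.sqrt ((p : ℝ) * q) - 1) /
            Real.sqrt ((p : ℝ) + q) * Real.sqrt p : ℝ) : ℂ) *
          Complex.I * Complex.exp (-(Complex.I * q * θ)) ) r := by
  have hbase : HasDerivAt (fun s : ℝ => s ^ Real.sqrt ((p : ℝ) * q))
      (Real.sqrt ((p : ℝ) * q) * r ^ (Real.sqrt ((p : ℝ) * q) - 1)) r :=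
    Real.hasDerivAt_rpow_const (Or.inl hr.ne')
  have h1 : HasDerivAt (fun s : ℝ =>
      ((s ^ Real.sqrt ((p : ℝ) * q) / Real.sqrt ((p : ℝ) + q) * Real.sqrt q : ℝ) : ℂ) *
        Complex.exp (Complex.I * p * θ))
      (((Real.sqrt ((p : ℝ) * q) * r ^ (Real.sqrt ((p : ℝ) * q) - 1) /
          Real.sqrt ((p : ℝ) + q) * Real.sqrt q : ℝ) : ℂ) *
        Complex.exp (Complex.I * p * θ)) r :=
    (((hbase.div_const _).mul_const _).ofReal_comp).mul_const _
  have h2 : HasDerivAt (fun s : ℝ =>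
      ((s ^ Real.sqrt ((p : ℝ) * q) / Real.sqrt ((p : ℝ) + q) * Real.sqrt p : ℝ) : ℂ) *
        Complex.I * Complex.exp (-(Complex.I * q * θ)))
      (((Real.sqrt ((p : ℝ) * q) * r ^ (Real.sqrt ((p : ℝ) * q) - 1) /
          Real.sqrt ((p : ℝ) + q) * Real.sqrt p : ℝ) : ℂ) *
        Complex.I * Complex.exp (-(Complex.I * q * θ))) r := by
    have := (((hbase.div_const (Real.sqrt ((p : ℝ) + q))).mul_const
      (Real.sqrt p)).ofReal_comp).mul_const (Complex.I * Complex.exp (-(Complex.I * q * θ)))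
    simpa [mul_assoc] using this
  exact HasDerivAt.prodMk h1 h2

lemma swphi_hasDerivAt_θ (p q : ℕ) (r θ : ℝ) :
    HasDerivAt (fun t => SWPhi p q r t)
      ( ((r ^ Real.sqrt ((p : ℝ) * q) / Real.sqrt ((p : ℝ) + q) * Real.sqrt q : ℝ) : ℂ) *
          Complex.exp (Complex.I * p * θ) * (Complex.I * p),
        ((r ^ Real.sqrt ((p : ℝ) * q) / Real.sqrt ((p : ℝ) + q) * Real.sqrt p : ℝ) : ℂ) *
          Complex.I * Complex.exp (-(Complex.I * q * θ)) * (-(Complex.I * q)) ) θ := by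
  have hid : HasDerivAt (fun t : ℝ => ((t : ℝ) : ℂ)) 1 θ := by
    simpa using (hasDerivAt_id θ).ofReal_comp
  have e1 : HasDerivAt (fun t : ℝ => Complex.exp (Complex.I * p * t))
      (Complex.exp (Complex.I * p * θ) * (Complex.I * p)) θ := by
    have h := ((hid.const_mul (Complex.I * p)).cexp)
    simpa [mul_assoc] using h
  have e2 : HasDerivAt (fun t : ℝ => Complex.exp (-(Complex.I * q * t)))
      (Complex.exp (-(Complex.I * q * θ)) * (-(Complex.I * q))) θ := by
    have h := (((hid.const_mul (Complex.I * q)).neg).cexp)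
    simpa [mul_assoc] using h
  have h1 := e1.const_mul
      (((r ^ Real.sqrt ((p : ℝ) * q) / Real.sqrt ((p : ℝ) + q) * Real.sqrt q : ℝ) : ℂ))
  have h2 := e2.const_mul
      (((r ^ Real.sqrt ((p : ℝ) * q) / Real.sqrt ((p : ℝ) + q) * Real.sqrt p : ℝ) : ℂ) *
        Complex.I)
  have h1' : HasDerivAt (fun t : ℝ =>
      ((r ^ Real.sqrt ((p : ℝ) * q) / Real.sqrt ((p : ℝ) + q) * Real.sqrt q : ℝ) : ℂ) *
        Complex.exp (Complex.I * p * t))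
      (((r ^ Real.sqrt ((p : ℝ) * q) / Real.sqrt ((p : ℝ) + q) * Real.sqrt q : ℝ) : ℂ) *
        Complex.exp (Complex.I * p * θ) * (Complex.I * p)) θ := by
    simpa [mul_assoc] using h1
  have h2' : HasDerivAt (fun t : ℝ =>
      ((r ^ Real.sqrt ((p : ℝ) * q) / Real.sqrt ((p : ℝ) + q) * Real.sqrt p : ℝ) : ℂ) *
        Complex.I * Complex.exp (-(Complex.I * q * t)))
      (((r ^ Real.sqrt ((p : ℝ) * q) / Real.sqrt ((p : ℝ) + q) * Real.sqrt p : ℝ) : ℂ) *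
        Complex.I * Complex.exp (-(Complex.I * q * θ)) * (-(Complex.I * q))) θ := by
    simpa [mul_assoc] using h2
  exact HasDerivAt.prodMk h1' h2'

/-- `Φ_{p,q}` is weakly conformal: `|∂_r Φ|² = |(1/r)∂_θ Φ|²` and
`⟨∂_r Φ, (1/r)∂_θ Φ⟩ = 0` for all `r > 0` and `θ`. -/
theorem swcone_weakly_conformal (p q : ℕ) (hp : 0 < p) (hq : 0 < q)
    (r θ : ℝ) (hr : 0 < r) :
    rinner (deriv (fun s => SWPhi p q s θ) r) (deriv (fun s => SWPhi p q s θ) r) =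
      rinner (r⁻¹ • deriv (fun t => SWPhi p q r t) θ)
        (r⁻¹ • deriv (fun t => SWPhi p q r t) θ) ∧
    rinner (deriv (fun s => SWPhi p q s θ) r)
      (r⁻¹ • deriv (fun t => SWPhi p q r t) θ) = 0 := by
  have hdr := (swphi_hasDerivAt_r p q r θ hr).deriv
  have hdθ := (swphi_hasDerivAt_θ p q r θ).deriv
  rw [hdr, hdθ]
  set a : ℝ := Real.sqrt ((p : ℝ) * q) with ha
  have hra : r ^ a = r ^ (a - 1) * r := by
    have h := Real.rpow_add_one hr.ne' (a - 1)
    simpa using h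
  have hq2 : Real.sqrt (q : ℝ) ^ 2 = (q : ℝ) := Real.sq_sqrt (by positivity)
  have hp2 : Real.sqrt (p : ℝ) ^ 2 = (p : ℝ) := Real.sq_sqrt (by positivity)
  have ha2 : a ^ 2 = (p : ℝ) * q := Real.sq_sqrt (by positivity)
  have hpq2 : Real.sqrt ((p : ℝ) + q) ^ 2 = (p : ℝ) + q := Real.sq_sqrt (by positivity)
  have hpq0 : Real.sqrt ((p : ℝ) + q) ≠ 0 := by positivity
  set e1 : ℂ := Complex.exp (Complex.I * p * θ) with he1
  set e2 : ℂ := Complex.exp (-(Complex.I * q * θ)) with he2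
  have n1 : e1.re ^ 2 + e1.im ^ 2 = 1 := by
    have h := Complex.sq_norm e1
    rw [he1, Complex.norm_exp] at h
    simp [Complex.normSq_apply] at h
    nlinarith [h]
  have n2 : e2.re ^ 2 + e2.im ^ 2 = 1 := by
    have h := Complex.sq_norm e2
    rw [he2, Complex.norm_exp] at h
    simp [Complex.normSq_apply] at h
    nlinarith [h]
  have hkeyv : r⁻¹ * (r ^ (a - 1) * r / Real.sqrt ((p : ℝ) + q) * Real.sqrt q)
      = r ^ (a - 1) / Real.sqrt ((p : ℝ) + q) * Real.sqrt q := by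
    field_simp
  have hkeyu : r⁻¹ * (r ^ (a - 1) * r / Real.sqrt ((p : ℝ) + q) * Real.sqrt p)
      = r ^ (a - 1) / Real.sqrt ((p : ℝ) + q) * Real.sqrt p := by
    field_simp
  have hsm : r⁻¹ • ((((r ^ a / Real.sqrt ((p : ℝ) + q) * Real.sqrt q : ℝ)) : ℂ) * e1 *
          (Complex.I * p),
        (((r ^ a / Real.sqrt ((p : ℝ) + q) * Real.sqrt p : ℝ)) : ℂ) * Complex.I * e2 *
          (-(Complex.I * q))) =
      ( (((r ^ (a - 1) / Real.sqrt ((p : ℝ) + q) * Real.sqrt q : ℝ)) : ℂ) * e1 *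
          (Complex.I * p),
        (((r ^ (a - 1) / Real.sqrt ((p : ℝ) + q) * Real.sqrt p : ℝ)) : ℂ) * Complex.I * e2 *
          (-(Complex.I * q)) ) := by
    rw [Prod.smul_mk, Complex.real_smul, Complex.real_smul, hra, Prod.mk.injEq]
    have hv := congrArg (fun x : ℝ => (x : ℂ)) hkeyv
    have hu := congrArg (fun x : ℝ => (x : ℂ)) hkeyu
    push_cast at hv hu
    push_cast
    constructor
    · linear_combination (e1 * (Complex.I * (p : ℂ))) * hv
    · linear_combination (Complex.I * e2 * (-(Complex.I * (q : ℂ)))) * hu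
  rw [hsm]
  simp only [rinner, map_mul, map_neg, Complex.conj_ofReal, Complex.conj_I]
  simp only [Complex.mul_re, Complex.mul_im, Complex.ofReal_re, Complex.ofReal_im,
    Complex.I_re, Complex.I_im, Complex.neg_re, Complex.neg_im, Complex.conj_re,
    Complex.conj_im, Complex.natCast_re, Complex.natCast_im]
  constructor
  · set A := r ^ (a - 1)
    set s := Real.sqrt ((p : ℝ) + q)
    set u := Real.sqrt (p : ℝ)
    set v := Real.sqrt (q : ℝ)
    have hs2 : s ^ 2 = (p : ℝ) + q := hpq2
    linear_combination (a^2*A^2*v^2/s^2 - A^2*v^2*(p:ℝ)^2/s^2) * n1 +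
      (a^2*A^2*u^2/s^2 - A^2*u^2*(q:ℝ)^2/s^2) * n2 +
      (a^2*A^2/s^2 - A^2*(p:ℝ)^2/s^2) * hq2 +
      (a^2*A^2/s^2 - A^2*(q:ℝ)^2/s^2) * hp2 +
      (A^2*((q:ℝ)+(p:ℝ))/s^2) * ha2
  · ring
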